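/- Let M₀ ∈ ℝ^{m×m} be symmetric positive definite, let 𝐃 ∈ ℝ^{n×(mp)}, g₀ ∈ ℝ^p, and λ > 0. Then the unique minimizer over X ∈ ℝ^{n×m} of the function X ↦ ⟨X, 𝐃(I_m ⊗ g₀)⟩ + λ·trace(X M₀ Xᵀ) is X* = −(1/(2λ)) · 𝐃 (M₀⁻¹ ⊗ g₀); in particular, the minimizer lies in the column space of 𝐃, i.e., X* = 𝐃C with coefficient matrix C = −(1/(2λ)) (M₀⁻¹ ⊗ g₀). -/

import Mathlib

open Matrix

private lemma trace_row_pos {n m : ℕ} (M : Matrix (Fin m) (Fin m) ℝ) (hM : M.PosDef)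
    (Z : Matrix (Fin n) (Fin m) ℝ) (hZ : Z ≠ 0) : 0 < (Z * M * Zᵀ).trace := by
  have hdiag : ∀ i, (Z * M * Zᵀ) i i = Z i ⬝ᵥ (M *ᵥ Z i) := by
    intro i
    simp only [Matrix.mul_apply, Matrix.transpose_apply, dotProduct, Matrix.mulVec,
      dotProduct, Finset.sum_mul, Finset.mul_sum]
    rw [Finset.sum_comm]
    apply Finset.sum_congr rfl; intro j _
    apply Finset.sum_congr rfl; intro k _
    ring
  obtain ⟨i, j, hij⟩ : ∃ i j, Z i j ≠ 0 := by
    by_contra h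
    push_neg at h
    exact hZ (by ext i j; simpa using h i j)
  have hrow : Z i ≠ 0 := fun h => hij (by simpa using congrFun h j)
  have hterm : ∀ a, 0 ≤ (Z * M * Zᵀ) a a := by
    intro a
    rw [hdiag a]
    simpa using hM.posSemidef.dotProduct_mulVec_nonneg (Z a)
  have hpos : 0 < (Z * M * Zᵀ) i i := by
    rw [hdiag i]
    simpa using hM.dotProduct_mulVec_pos hrow
  unfold Matrix.trace Matrix.diag
  exact Finset.sum_pos' (fun a _ => hterm a) ⟨i, Finset.mem_univ i, hpos⟩

theorem representer_core {n m p : ℕ}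
    (M₀ : Matrix (Fin m) (Fin m) ℝ) (hM₀ : M₀.PosDef)
    (D : Matrix (Fin n) (Fin m × Fin p) ℝ) (g₀ : Fin p → ℝ)
    (lam : ℝ) (hlam : 0 < lam)
    (Kg : Matrix (Fin m × Fin p) (Fin m) ℝ)
    (hKg : ∀ i k j, Kg (i, k) j = (if i = j then (1 : ℝ) else 0) * g₀ k)
    (KMg : Matrix (Fin m × Fin p) (Fin m) ℝ)
    (hKMg : ∀ i k j, KMg (i, k) j = M₀⁻¹ i j * g₀ k)
    (Xstar : Matrix (Fin n) (Fin m) ℝ)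
    (hX : Xstar = (-(1 / (2 * lam))) • (D * KMg)) :
    (∀ Y : Matrix (Fin n) (Fin m) ℝ, Y ≠ Xstar →
      (Xstarᵀ * (D * Kg)).trace + lam * (Xstar * M₀ * Xstarᵀ).trace <
        (Yᵀ * (D * Kg)).trace + lam * (Y * M₀ * Yᵀ).trace) ∧
    Xstar = D * ((-(1 / (2 * lam))) • KMg) := by
  have hMinv : M₀⁻¹ * M₀ = 1 := Matrix.nonsing_inv_mul M₀ (isUnit_iff_ne_zero.mpr hM₀.det_pos.ne')
  have hKrel : KMg = Kg * M₀⁻¹ := by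
    ext ⟨i, k⟩ j
    rw [hKMg i k j, Matrix.mul_apply]
    simp only [hKg]
    rw [Finset.sum_eq_single i (fun b _ hb => by simp [hb.symm]) (by simp)]
    simp [mul_comm]
  have hA : D * Kg = (-(2*lam)) • (Xstar * M₀) := by
    rw [hX, hKrel, Matrix.smul_mul, smul_smul]
    have h1 : D * (Kg * M₀⁻¹) * M₀ = D * Kg := by
      rw [Matrix.mul_assoc, Matrix.mul_assoc, hMinv, Matrix.mul_one]
    have h2 : -(2 * lam) * -(1 / (2 * lam)) = 1 := by field_simp
    rw [h1, h2, one_smul]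
  have hMsymm : M₀ᵀ = M₀ := hM₀.1
  constructor
  · intro Y hY
    set Z := Y - Xstar with hZdef
    have hZ : Z ≠ 0 := sub_ne_zero.mpr hY
    have hYeq : Y = Xstar + Z := by rw [hZdef]; abel
    have hcross : (Z * M₀ * Xstarᵀ).trace = (Xstar * M₀ * Zᵀ).trace := by
      rw [← Matrix.trace_transpose (Z * M₀ * Xstarᵀ)]
      rw [Matrix.transpose_mul, Matrix.transpose_mul, Matrix.transpose_transpose, hMsymm,
        Matrix.mul_assoc]
    have hcross2 : (Zᵀ * (Xstar * M₀)).trace = (Xstar * M₀ * Zᵀ).trace :=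
      Matrix.trace_mul_comm _ _
    have key : (Yᵀ * (D * Kg)).trace + lam * (Y * M₀ * Yᵀ).trace
        = (Xstarᵀ * (D * Kg)).trace + lam * (Xstar * M₀ * Xstarᵀ).trace
          + lam * (Z * M₀ * Zᵀ).trace := by
      rw [hYeq, hA]
      simp only [Matrix.transpose_add, Matrix.add_mul, Matrix.mul_add, Matrix.mul_smul,
        Matrix.trace_add, Matrix.trace_smul, smul_eq_mul]
      rw [hcross2, hcross]
      ring
    rw [key]
    have := trace_row_pos M₀ hM₀ Z hZ
    nlinarith
  · rw [hX, Matrix.mul_smul]
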